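/- Let (𝔤, [·,·], K) be a quadratic Lie algebra, i.e. K is a nondegenerate symmetric invariant bilinear form on 𝔤. Let K^♯: 𝔤 → 𝔤* be the induced isomorphism K^♯(u)(v) = K(u,v). On the graded vector space 𝔤*[1] ⊕ 𝔤 define 𝔩_1 = (K^♯)^{-1}: 𝔤* → 𝔤 and 𝔩_2(u+ξ, v+η) = [u,v] + ad*_u η − ad*_v ξ, where ad*_u is the coadjoint action. Then (𝔤*[1] ⊕ 𝔤; 𝔩_1, 𝔩_2) is a strict Lie 2-algebra, i.e. a 2-term differential graded Lie algebra: 𝔩_1 commutes appropriately with 𝔩_2, namely 𝔩_2((K^♯)^{-1}(ξ), η) = 𝔩_2(ξ, (K^♯)^{-1}(η)) and (K^♯)^{-1}𝔩_2(u,η) = 𝔩_2(u, (K^♯)^{-1}(η)), and the graded Jacobi identities hold. -/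
import Mathlib


/-- For a quadratic Lie algebra `(𝔤, [·,·], K)`, the complex
`𝔤* --(K^♯)⁻¹--> 𝔤` with `𝔩₂(u+ξ, v+η) = [u,v] + ad*_u η − ad*_v ξ` is a strict Lie
2-algebra (2-term DGLA): the chain conditions
`𝔩₂((K^♯)⁻¹ξ, η) = 𝔩₂(ξ, (K^♯)⁻¹η)` and `(K^♯)⁻¹ 𝔩₂(u,η) = 𝔩₂(u, (K^♯)⁻¹η)` hold,
together with the (mixed) Jacobi identity. -/
theorem quadratic_lie_algebra_gives_strict_lie_2_algebra
    (g : Type) [LieRing g] [LieAlgebra ℝ g]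
    (K : g →ₗ[ℝ] g →ₗ[ℝ] ℝ)
    (hK_symm : ∀ u v : g, K u v = K v u)
    (hK_inv : ∀ u v w : g, K ⁅u, v⁆ w = - K v ⁅u, w⁆)
    -- `K^♯ : 𝔤 → 𝔤*` is an isomorphism induced by the nondegenerate form `K`
    (Ksharp : g ≃ₗ[ℝ] Module.Dual ℝ g)
    (hKsharp : ∀ u v : g, Ksharp u v = K u v)
    -- the coadjoint action
    (coad : g → Module.Dual ℝ g → Module.Dual ℝ g)
    (hcoad : ∀ (u w : g) (η : Module.Dual ℝ g), coad u η w = - η ⁅u, w⁆) :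
    -- 𝔩₂(𝔩₁ ξ, η) = 𝔩₂(ξ, 𝔩₁ η), i.e. 𝔩₂((K^♯)⁻¹ξ, η) = − 𝔩₂((K^♯)⁻¹η, ξ)
    (∀ ξ η : Module.Dual ℝ g, coad (Ksharp.symm ξ) η = - coad (Ksharp.symm η) ξ) ∧
    -- 𝔩₁ 𝔩₂(u, η) = 𝔩₂(u, 𝔩₁ η)
    (∀ (u : g) (η : Module.Dual ℝ g), Ksharp.symm (coad u η) = ⁅u, Ksharp.symm η⁆) ∧
    -- the mixed Jacobi identity
    (∀ (u v : g) (η : Module.Dual ℝ g),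
      coad u (coad v η) - coad v (coad u η) = coad ⁅u, v⁆ η) := by
  -- η = Ksharp (Ksharp.symm η)
  have happ : ∀ (η : Module.Dual ℝ g) (w : g), η w = K (Ksharp.symm η) w := by
    intro η w
    rw [← hKsharp, Ksharp.apply_symm_apply]
  refine ⟨?_, ?_, ?_⟩
  · intro ξ η
    ext w
    simp only [LinearMap.neg_apply, hcoad]
    rw [happ η, happ ξ]
    have h1 := hK_inv (Ksharp.symm ξ) (Ksharp.symm η) w
    have h2 := hK_inv (Ksharp.symm η) (Ksharp.symm ξ) w
    have h3 : K ⁅Ksharp.symm ξ, Ksharp.symm η⁆ w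
        = - K ⁅Ksharp.symm η, Ksharp.symm ξ⁆ w := by
      have h4 : (⁅Ksharp.symm ξ, Ksharp.symm η⁆ : g) = -⁅Ksharp.symm η, Ksharp.symm ξ⁆ :=
        (lie_skew _ _).symm
      rw [h4, map_neg, LinearMap.neg_apply]
    linarith
  · intro u η
    have : coad u η = Ksharp ⁅u, Ksharp.symm η⁆ := by
      ext w
      rw [hcoad, hKsharp, hK_inv]
      rw [happ η]
    rw [this, Ksharp.symm_apply_apply]
  · intro u v η
    ext w
    simp only [LinearMap.sub_apply, hcoad, map_neg, LinearMap.neg_apply]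
    have : ⁅⁅u, v⁆, w⁆ = ⁅u, ⁅v, w⁆⁆ - ⁅v, ⁅u, w⁆⁆ := by
      rw [lie_lie]
    rw [this, map_sub]
    ring
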